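/- In the TSRA reduction: Given a set-cover instance (U, F) with bipartite graph G having node set Ū ∪ F̄, edges from f_j to u_i whenever i ∈ F_j, all nodes the same color, source set S = F̄, and r = |F|: if there exist t subsets F_{j_1},…,F_{j_t} whose union is U, then taking T = {f_{j_1},…,f_{j_t}} makes G strongly (r,Δ,T)-robust with respect to S. -/
import Mathlib


open Finset

def threeColors {V Γ : Type*} (Δ : V → Γ) (F : Finset V) : Prop :=
  ∃ u ∈ F, ∃ v ∈ F, ∃ w ∈ F, Δ u ≠ Δ v ∧ Δ v ≠ Δ w ∧ Δ u ≠ Δ w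

def reachable {V Γ : Type*} [DecidableEq V] (N : V → Finset V) (Δ : V → Γ)
    (T : Finset V) (r : ℕ) (C : Finset V) : Prop :=
  ∃ i ∈ C, r ≤ ((N i) \ C).card ∨ threeColors Δ ((N i) \ C) ∨ ∃ t ∈ (N i) \ C, t ∈ T

def strongRobust {V Γ : Type*} [Fintype V] [DecidableEq V] (N : V → Finset V) (Δ : V → Γ)
    (T : Finset V) (r : ℕ) (S : Finset V) : Prop :=
  ∀ C : Finset V, C.Nonempty → C ⊆ Sᶜ → reachable N Δ T r C

/-- The bipartite graph of the set-cover reduction: edge from `f_j` to `u_i` iff `i ∈ F j`. -/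
def scNbhd (p m : ℕ) (F : Fin m → Finset (Fin p)) :
    (Fin p ⊕ Fin m) → Finset (Fin p ⊕ Fin m) :=
  Sum.elim
    (fun i => (Finset.univ.filter fun j => i ∈ F j).image Sum.inr)
    (fun _ => ∅)

/-- The source set `F̄` of the set-cover reduction. -/
def scSource (p m : ℕ) : Finset (Fin p ⊕ Fin m) :=
  Finset.univ.image Sum.inr


theorem stmt14 (p m t : ℕ) (F : Fin m → Finset (Fin p))
    (J : Finset (Fin m)) (hJ : J.card = t)
    -- the `t` chosen subsets cover `U`
    (hcover : ∀ i : Fin p, ∃ j ∈ J, i ∈ F j) :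
    strongRobust (scNbhd p m F) (fun _ : Fin p ⊕ Fin m => ())
      (J.image Sum.inr) m (scSource p m) := by
  intro C hC hCsub
  obtain ⟨x, hx⟩ := hC
  have hxS := hCsub hx
  -- x must be of the form Sum.inl i
  obtain ⟨i, rfl⟩ : ∃ i, x = Sum.inl i := by
    cases x with
    | inl i => exact ⟨i, rfl⟩
    | inr j =>
      exfalso
      simp [scSource, Finset.mem_compl] at hxS
  refine ⟨Sum.inl i, hx, Or.inr (Or.inr ?_)⟩
  obtain ⟨j, hjJ, hij⟩ := hcover i
  refine ⟨Sum.inr j, ?_, ?_⟩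
  · rw [Finset.mem_sdiff]
    constructor
    · simp [scNbhd, hij]
    · intro hmem
      have := hCsub hmem
      simp [scSource, Finset.mem_compl] at this
  · exact Finset.mem_image_of_mem _ hjJ
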